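/- In a category with finite limits, every morphism that is Bourn-normal to some equivalence relation is a monomorphism. -/

import Mathlib

open CategoryTheory CategoryTheory.Limits

universe v u

/-- An internal equivalence relation on an object `X` of a finitely complete category. -/
structure InternalEqRel (C : Type u) [Category.{v} C] [HasFiniteLimits C] (X : C) where
  R : C
  r1 : R ⟶ X
  r2 : R ⟶ X
  rel_mono : Mono (prod.lift r1 r2)
  rfl' : X ⟶ R
  rfl_r1 : rfl' ≫ r1 = 𝟙 X
  rfl_r2 : rfl' ≫ r2 = 𝟙 X
  symm : R ⟶ R
  symm_r1 : symm ≫ r1 = r2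
  symm_r2 : symm ≫ r2 = r1
  htrans : pullback r2 r1 ⟶ R
  htrans_r1 : htrans ≫ r1 = pullback.fst r2 r1 ≫ r1
  htrans_r2 : htrans ≫ r2 = pullback.snd r2 r1 ≫ r2

/-- `n` is Bourn-normal to the equivalence relation `E`: `n × n` factors through
`⟨r₁,r₂⟩` via `nt`, and both the square comparing `nt` with `⟨r₁,r₂⟩` over `n × n`
and the square comparing `nt` with `r₁` over `n` (with first projections) are pullbacks. -/
def IsBournNormalTo {C : Type u} [Category.{v} C] [HasFiniteLimits C] {N X : C}
    (n : N ⟶ X) (E : InternalEqRel C X) : Prop :=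
  ∃ nt : N ⨯ N ⟶ E.R,
    IsPullback nt (𝟙 (N ⨯ N)) (prod.lift E.r1 E.r2) (prod.map n n) ∧
    IsPullback nt prod.fst E.r1 n

/-- In a category with finite limits, every morphism that is Bourn-normal to some
equivalence relation is a monomorphism. -/
theorem bournNormal_is_mono {C : Type u} [Category.{v} C] [HasFiniteLimits C]
    {N X : C} (n : N ⟶ X) (E : InternalEqRel C X) (h : IsBournNormalTo n E) :
    Mono n := by
  obtain ⟨nt, h1, h2⟩ := h
  constructor
  intro Z f g hfg
  -- key: any m : Z ⟶ N ⨯ N whose image under n × n is (f≫n, f≫n) satisfies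
  -- m ≫ nt = f ≫ n ≫ E.rfl'
  have key : ∀ m : Z ⟶ N ⨯ N, m ≫ prod.fst ≫ n = f ≫ n → m ≫ prod.snd ≫ n = f ≫ n →
      m ≫ nt = f ≫ n ≫ E.rfl' := by
    intro m hm1 hm2
    have w : (f ≫ n ≫ E.rfl') ≫ prod.lift E.r1 E.r2 = m ≫ prod.map n n := by
      apply Limits.prod.hom_ext <;>
        simp [E.rfl_r1, E.rfl_r2, reassoc_of% hm1, reassoc_of% hm2, hm1, hm2, prod.lift_fst, prod.lift_snd]
    have hl := h1.lift_fst (f ≫ n ≫ E.rfl') m w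
    have hr := h1.lift_snd (f ≫ n ≫ E.rfl') m w
    rw [Category.comp_id] at hr
    rw [hr] at hl
    exact hl
  have e1 : prod.lift f g ≫ nt = f ≫ n ≫ E.rfl' := by
    apply key <;> simp [hfg, prod.lift_fst_assoc, prod.lift_snd_assoc]
  have e2 : prod.lift f f ≫ nt = f ≫ n ≫ E.rfl' := by
    apply key <;> simp [prod.lift_fst_assoc, prod.lift_snd_assoc]
  have : prod.lift f g = prod.lift f f := by
    apply h2.hom_ext
    · exact e1.trans e2.symm
    · simp [prod.lift_fst]
  have := congrArg (fun k => k ≫ (prod.snd : N ⨯ N ⟶ N)) this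
  simpa [prod.lift_snd] using this.symm
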